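/- Let k'/k be a finite purely inseparable extension of fields of characteristic p > 0 and let G be a subgroup of (k')^× with the property that the only intermediate field E of k'/k with G ⊆ E is E = k' itself. Then for every integer λ, the only k-subspaces W of K = k'(λ) satisfying g^λ·W ⊆ W for all g ∈ G are {0} and K. (That is, the irreducible representation k'(λ) of (k')^× of weight λ remains irreducible upon restriction to G.) -/

import Mathlib

/-- Let k'/k be a finite purely inseparable extension of fields of
characteristic p > 0 and G a subgroup of (k')ˣ such that the only intermediate field
E of k'/k with G ⊆ E is k' itself.  Then for every λ ∈ ℤ the only k-subspaces W of
K = k'(λ) with g^λ·W ⊆ W for all g ∈ G are {0} and K. -/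
theorem stmt_9 (p : ℕ) [Fact p.Prime] (k k' : Type*) [Field k] [Field k']
    [Algebra k k'] [CharP k p] [IsPurelyInseparable k k'] [FiniteDimensional k k']
    (G : Subgroup k'ˣ)
    (hG : ∀ E : IntermediateField k k', (∀ g ∈ G, ((g : k'ˣ) : k') ∈ E) → E = ⊤)
    (lam : ℤ) (K : IntermediateField k k')
    (hK : K = IntermediateField.adjoin k {y : k' | ∃ x : k', x ≠ 0 ∧ y = x ^ lam}) :
    ∀ W : Submodule k k', (∀ w ∈ W, w ∈ K) →
      (∀ g ∈ G, ∀ w ∈ W, ((g : k'ˣ) : k') ^ lam * w ∈ W) →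
      W = ⊥ ∨ (W : Set k') = (K : Set k') := by
  have hp : p.Prime := Fact.out
  haveI : CharP k' p := charP_of_injective_algebraMap (algebraMap k k').injective p
  haveI : ExpChar k p := ExpChar.prime hp
  intro W hWK hWstab
  by_cases hW0 : W = ⊥
  · exact Or.inl hW0
  right
  -- the field F generated over k by the λ-th powers of elements of G
  set S : Set k' := {y | ∃ g : k'ˣ, g ∈ G ∧ y = ((g : k') ^ lam)} with hSdef
  set F : IntermediateField k k' := IntermediateField.adjoin k S with hFdef
  -- Step A : K ≤ F
  have hKF : K ≤ F := by
    rw [hK, IntermediateField.adjoin_le_iff]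
    rintro y ⟨x, hx0, rfl⟩
    rcases eq_or_ne lam 0 with rfl | hlam0
    · simpa using F.one_mem
    -- decompose lam = p^a * c with p ∤ c
    set m : ℕ := lam.natAbs with hm
    have hm0 : m ≠ 0 := Int.natAbs_ne_zero.mpr hlam0
    set a : ℕ := m.factorization p with ha
    have hdvd : ((p : ℤ) ^ a) ∣ lam := by
      rw [← Int.dvd_natAbs]
      exact_mod_cast Nat.ordProj_dvd m p
    set c : ℤ := lam / (p : ℤ) ^ a with hc
    have hlam : lam = (p : ℤ) ^ a * c := (Int.mul_ediv_cancel' hdvd).symm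
    have hpc : ¬ (p : ℤ) ∣ c := by
      have h1 : m = p ^ a * c.natAbs := by
        have := congrArg Int.natAbs hlam
        simpa [Int.natAbs_mul, Int.natAbs_pow] using this
      have h2 : c.natAbs = m / p ^ a := by
        rw [h1]; exact (Nat.mul_div_cancel_left _ (Nat.pow_pos (n := a) hp.pos)).symm
      rw [← Int.dvd_natAbs, Int.natCast_dvd_natCast, h2]
      exact Nat.not_dvd_ordCompl hp hm0
    -- Frobenius step: every p^a-th power lies in F
    have hfrob : ∀ y : k', y ^ (p ^ a) ∈ F := by
      -- first, for elements of G
      have hga : ∀ g : k'ˣ, g ∈ G → ((g : k') ^ (p ^ a)) ∈ F := by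
        intro g hg
        obtain ⟨n₀, z, hz⟩ := IsPurelyInseparable.pow_mem k p ((g : k'ˣ) : k')
        set n : ℕ := max n₀ a with hn
        have hna : a ≤ n := le_max_right _ _
        have hgn : ((g : k') ^ (p ^ n)) ∈ F := by
          have : ((g : k') ^ (p ^ n₀)) ^ (p ^ (n - n₀)) = (g : k') ^ (p ^ n) := by
            rw [← pow_mul, ← pow_add]
            congr 1
            rw [Nat.add_sub_cancel' (le_max_left _ _)]
          rw [← this, ← hz, ← map_pow]
          exact F.algebraMap_mem _
        -- Bezout
        have hcop : IsCoprime c ((p : ℤ) ^ (n - a)) := by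
          exact (((Nat.prime_iff_prime_int.mp hp).coprime_iff_not_dvd.mpr hpc).symm).pow_right
        obtain ⟨s, t, hst⟩ := hcop
        have hkey : s * lam + t * (p : ℤ) ^ n = (p : ℤ) ^ a := by
          have hpn : ((p : ℤ) ^ a) * ((p : ℤ) ^ (n - a)) = (p : ℤ) ^ n := by
            rw [← pow_add, Nat.add_sub_cancel' hna]
          calc s * lam + t * (p : ℤ) ^ n
              = (s * c + t * (p : ℤ) ^ (n - a)) * (p : ℤ) ^ a := by
                rw [hlam, ← hpn]; ring
            _ = (p : ℤ) ^ a := by rw [hst, one_mul]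
        -- compute in the unit group
        have hunit : (g : k'ˣ) ^ ((p : ℤ) ^ a) = ((g : k'ˣ) ^ lam) ^ s * ((g : k'ˣ) ^ ((p : ℤ) ^ n)) ^ t := by
          rw [← zpow_mul, ← zpow_mul, ← zpow_add, mul_comm lam s, mul_comm ((p:ℤ)^n) t, hkey]
        have hval : ((g : k') ^ ((p:ℤ) ^ a)) = ((g : k') ^ lam) ^ s * ((g : k') ^ ((p:ℤ) ^ n)) ^ t := by
          have := congrArg (Units.val) hunit
          simpa [Units.val_zpow_eq_zpow_val, Units.val_mul] using this
        have h1 : ((g : k') ^ lam) ∈ F :=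
          IntermediateField.subset_adjoin k S ⟨g, hg, rfl⟩
        have h2 : ((g : k') ^ ((p:ℤ) ^ n)) ∈ F := by
          have : ((p:ℤ) ^ n) = ((p ^ n : ℕ) : ℤ) := by push_cast; ring
          rw [this, zpow_natCast]
          exact hgn
        have : ((g : k') ^ ((p:ℤ) ^ a)) ∈ F := by
          rw [hval]
          exact mul_mem (F.pow_mem h1 s) (F.pow_mem h2 t)
        have hcast : ((p:ℤ) ^ a) = ((p ^ a : ℕ) : ℤ) := by push_cast; ring
        rwa [hcast, zpow_natCast] at this
      -- the field generated by G is k'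
      have htop : IntermediateField.adjoin k {y : k' | ∃ g : k'ˣ, g ∈ G ∧ y = (g : k')} = ⊤ := by
        apply hG
        intro g hg
        exact IntermediateField.subset_adjoin k _ ⟨g, hg, rfl⟩
      intro y
      have hy : y ∈ IntermediateField.adjoin k {y : k' | ∃ g : k'ˣ, g ∈ G ∧ y = (g : k')} := by
        rw [htop]; trivial
      induction hy using IntermediateField.adjoin_induction with
      | mem x hx => obtain ⟨g, hg, rfl⟩ := hx; exact hga g hg
      | algebraMap r => rw [← map_pow]; exact F.algebraMap_mem _
      | add x y _ _ hx hy => rw [add_pow_char_pow]; exact add_mem hx hy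
      | inv x _ hx => rw [inv_pow]; exact F.inv_mem hx
      | mul x y _ _ hx hy => rw [mul_pow]; exact mul_mem hx hy
    -- conclude : x^lam = (x^c)^(p^a) ∈ F
    have hxlam : x ^ lam = (x ^ c) ^ (p ^ a) := by
      have hxu : (Units.mk0 x hx0) ^ lam = ((Units.mk0 x hx0) ^ c) ^ ((p ^ a : ℕ) : ℤ) := by
        rw [← zpow_mul]
        congr 1
        rw [hlam]; push_cast; ring
      have h := congrArg (Units.val) hxu
      rw [Units.val_zpow_eq_zpow_val, Units.val_zpow_eq_zpow_val, Units.val_zpow_eq_zpow_val,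
        Units.val_mk0, zpow_natCast] at h
      exact h
    rw [hxlam]
    exact hfrob _
  -- Step B : the algebra generated by S stabilizes W
  have halg : ∀ x ∈ S, IsAlgebraic k x := fun x _ => (Algebra.IsAlgebraic.isAlgebraic x)
  have hFA : F.toSubalgebra = Algebra.adjoin k S :=
    IntermediateField.adjoin_toSubalgebra_of_isAlgebraic halg
  have hstab : ∀ z ∈ Algebra.adjoin k S, ∀ v ∈ W, z * v ∈ W := by
    intro z hz
    induction hz using Algebra.adjoin_induction with
    | mem x hx =>
      obtain ⟨g, hg, rfl⟩ := hx
      intro v hv; exact hWstab g hg v hv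
    | algebraMap r =>
      intro v hv
      rw [← Algebra.smul_def]
      exact W.smul_mem r hv
    | add x y _ _ hx hy =>
      intro v hv
      rw [add_mul]
      exact W.add_mem (hx v hv) (hy v hv)
    | mul x y _ _ hx hy =>
      intro v hv
      rw [mul_assoc]
      exact hx _ (hy v hv)
  have hFW : ∀ z ∈ F, ∀ v ∈ W, z * v ∈ W := by
    intro z hz
    have : z ∈ Algebra.adjoin k S := by
      rw [← hFA]; exact hz
    exact hstab z this
  -- conclude
  obtain ⟨w, hwW, hw0⟩ := (Submodule.ne_bot_iff W).mp hW0
  have hwK : w ∈ K := hWK w hwW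
  ext z
  constructor
  · exact fun hz => hWK z hz
  · intro hz
    have h1 : w⁻¹ * z ∈ K := mul_mem (K.inv_mem hwK) hz
    have h2 : (w⁻¹ * z) * w ∈ W := hFW _ (hKF h1) w hwW
    have : (w⁻¹ * z) * w = z := by field_simp
    rwa [this] at h2
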